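/- Let i be a positive integer with p² ∤ i, let u ≥ 0 be an integer, and set d = p^{2u}·i. Then for every integer n with 0 ≤ n < u, T_n(f_d) = Σ_{t=0}^{n} p^{n−t}·f_{p^{2u−2n+4t}·i}. -/

import Mathlib

/-- Action of the normalized Hecke operators `T(p^{2n})` on Zagier's weight 1/2
forms `f_d`, for `d = p^{2u}·i` with `p² ∤ i` and `0 ≤ n < u`. -/
theorem stmt_4 {p : ℕ} [Fact p.Prime] (hp : p ≠ 2)
    {M : Type*} [AddCommGroup M] [Module ℤ M]
    (f : ℕ → M) (T : M →ₗ[ℤ] M)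
    (hT : ∀ d : ℕ, 0 < d →
      T (f d) = (p : ℤ) • (if p ^ 2 ∣ d then f (d / p ^ 2) else 0)
        + (legendreSym p (-(d : ℤ))) • f d + f (p ^ 2 * d))
    (Tn : ℕ → M →ₗ[ℤ] M)
    (hTn0 : Tn 0 = LinearMap.id) (hTn1 : Tn 1 = T)
    (hTnrec : ∀ n : ℕ, Tn (n + 2) = T ∘ₗ Tn (n + 1) - (p : ℤ) • Tn n)
    (i u : ℕ) (hi : 0 < i) (hip : ¬ p ^ 2 ∣ i)
    (d : ℕ) (hd : d = p ^ (2 * u) * i)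
    (n : ℕ) (hn : n < u) :
    Tn n (f d) =
      ∑ t ∈ Finset.range (n + 1),
        ((p : ℤ) ^ (n - t)) • f (p ^ (2 * (u - n) + 4 * t) * i) := by
  obtain rfl : ‹Module ℤ M› = AddCommGroup.toIntModule M :=
    Subsingleton.elim
      (h := ⟨fun P Q => (AddCommGroup.uniqueIntModule.uniq P).trans
        (AddCommGroup.uniqueIntModule.uniq Q).symm⟩) _ _
  have hp0 : 0 < p := (Fact.out : p.Prime).pos
  -- key lemma
  have key : ∀ k : ℕ, T (f (p ^ (2 * (k + 1)) * i)) =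
      (p : ℤ) • f (p ^ (2 * k) * i) + f (p ^ (2 * (k + 2)) * i) := by
    intro k
    have hpos : 0 < p ^ (2 * (k + 1)) * i := Nat.mul_pos (pow_pos hp0 _) hi
    have hdvd : p ^ 2 ∣ p ^ (2 * (k + 1)) * i :=
      Dvd.dvd.mul_right (pow_dvd_pow p (by omega)) i
    have hleg : legendreSym p (-(((p ^ (2 * (k + 1)) * i : ℕ) : ℤ))) = 0 := by
      rw [legendreSym.eq_zero_iff]
      push_cast
      simp [mul_comm, ZMod.natCast_self]
    have hdiv : p ^ (2 * (k + 1)) * i / p ^ 2 = p ^ (2 * k) * i := by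
      rw [show 2 * (k + 1) = 2 * k + 2 by ring, pow_add, mul_comm (p ^ (2*k)) (p^2),
        mul_assoc, Nat.mul_div_cancel_left _ (pow_pos hp0 _)]
    rw [hT _ hpos, if_pos hdvd, hdiv, hleg, zero_smul, add_zero]
    congr 2
    ring
  have Q : ∀ n m : ℕ, Tn n (f (p ^ (2 * (m + n)) * i)) =
      ∑ t ∈ Finset.range (n + 1), ((p : ℤ) ^ (n - t)) • f (p ^ (2 * (m + 2 * t)) * i) := by
    intro n
    induction n using Nat.twoStepInduction with
    | zero => intro m; simp [hTn0]
    | one =>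
      intro m
      rw [hTn1, key m, Finset.sum_range_succ, Finset.sum_range_one]
      norm_num
    | more n ih ih1 =>
      intro m
      rw [hTnrec n, LinearMap.sub_apply, LinearMap.comp_apply, LinearMap.smul_apply]
      have e1 : (p ^ (2 * (m + (n + 2))) * i) = (p ^ (2 * ((m + 1) + (n + 1))) * i) := by
        congr 2; ring
      rw [e1, ih1 (m + 1), map_sum]
      have e2 : ∀ t ∈ Finset.range (n + 2),
          T (((p : ℤ) ^ (n + 1 - t)) • f (p ^ (2 * ((m + 1) + 2 * t)) * i)) =
          ((p : ℤ) ^ (n + 2 - t)) • f (p ^ (2 * (m + 2 * t)) * i)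
            + ((p : ℤ) ^ (n + 1 - t)) • f (p ^ (2 * ((m + 2) + 2 * t)) * i) := by
        intro t ht
        have htle : t ≤ n + 1 := by simpa using Nat.lt_succ_iff.mp (Finset.mem_range.mp ht)
        rw [T.map_smul, show 2 * ((m + 1) + 2 * t) = 2 * ((m + 2 * t) + 1) by ring,
          key (m + 2 * t), smul_add, smul_smul,
          show ((p : ℤ) ^ (n + 1 - t) * p) = (p : ℤ) ^ (n + 2 - t) by
            rw [← pow_succ]; congr 1; omega,
          show 2 * ((m + 2 * t) + 2) = 2 * ((m + 2) + 2 * t) by ring]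
      rw [Finset.sum_congr rfl e2, Finset.sum_add_distrib]
      have ih' := ih (m + 2)
      rw [show 2 * ((m + 2) + n) = 2 * (m + 1 + (n + 1)) by ring] at ih'
      rw [ih']
      have e3 : ((p : ℤ)) • ∑ t ∈ Finset.range (n + 1),
            ((p : ℤ) ^ (n - t)) • f (p ^ (2 * ((m + 2) + 2 * t)) * i)
          = ∑ t ∈ Finset.range (n + 1),
            ((p : ℤ) ^ (n + 1 - t)) • f (p ^ (2 * ((m + 2) + 2 * t)) * i) := by
        rw [Finset.smul_sum]
        refine Finset.sum_congr rfl fun t ht => ?_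
        have htle : t ≤ n := Nat.lt_succ_iff.mp (Finset.mem_range.mp ht)
        rw [smul_smul, show n + 1 - t = (n - t) + 1 by omega, pow_succ, mul_comm]
      rw [e3]
      rw [show (n + 2) = (n + 1) + 1 from rfl, Finset.sum_range_succ ( fun t =>
        ((p : ℤ) ^ (n + 1 - t)) • f (p ^ (2 * ((m + 2) + 2 * t)) * i)) (n + 1)]
      rw [Finset.sum_range_succ (fun t =>
        ((p : ℤ) ^ (n + 2 - t)) • f (p ^ (2 * (m + 2 * t)) * i)) (n + 2)]
      rw [Finset.sum_range_succ (fun t =>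
        ((p : ℤ) ^ (n + 2 - t)) • f (p ^ (2 * (m + 2 * t)) * i)) (n + 1)]
      simp only [Nat.sub_self, pow_zero, one_smul]
      rw [show 2 * ((m + 2) + 2 * (n + 1)) = 2 * (m + 2 * (n + 2)) by ring]
      abel
  have := Q n (u - n)
  rw [hd, show 2 * u = 2 * ((u - n) + n) by omega, this]
  refine Finset.sum_congr rfl fun t ht => ?_
  rw [show 2 * (u - n + 2 * t) = 2 * (u - n) + 4 * t by ring]
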